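/- (Disjoint survival via conditioning) For bond percolation with parameter p on a finite graph G, for any vertices x, y and integers r, s: P(∂B_x(r) ≠ ∅, ∂B_y(s) ≠ ∅, B_x(r) ∩ B_y(s) = ∅) ≤ P(∂B_x(r) ≠ ∅) · max_{A ⊆ V} P(∂B_y(s) ≠ ∅ off A). -/

import Mathlib

open Classical

noncomputable section

/-- Two vertices are joined by an edge of `G` that is open in the configuration `ω`. -/
def OpenAdj {V : Type*} (G : SimpleGraph V) (ω : Sym2 V → Bool) (x y : V) : Prop :=
  G.Adj x y ∧ ω s(x, y) = true

/-- `x` and `y` are connected by an open path with at most `r` edges. -/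
def ConnWithin {V : Type*} (G : SimpleGraph V) (ω : Sym2 V → Bool) (x y : V) (r : ℕ) : Prop :=
  ∃ l : List V, List.Chain (OpenAdj G ω) x l ∧
    (x :: l).getLast (List.cons_ne_nil x l) = y ∧ l.length ≤ r

/-- The intrinsic (open-path) distance from `x` to `y` equals `r`. -/
def DistEq {V : Type*} (G : SimpleGraph V) (ω : Sym2 V → Bool) (x y : V) (r : ℕ) : Prop :=
  ConnWithin G ω x y r ∧ ∀ s < r, ¬ ConnWithin G ω x y s

/-- The boundary `∂B_x(r)` of the intrinsic ball of radius `r` around `x` is nonempty. -/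
def SphereNonempty {V : Type*} (G : SimpleGraph V) (ω : Sym2 V → Bool) (x : V) (r : ℕ) : Prop :=
  ∃ y, DistEq G ω x y r

/-- The Bernoulli product weight of a single percolation configuration. -/
def edgeWeight {V : Type*} [Fintype V] [DecidableEq V] (p : ℝ) (ω : Sym2 V → Bool) : ℝ :=
  ∏ e : Sym2 V, if ω e then p else 1 - p

/-- The probability of the event `S` under bond percolation with parameter `p`. -/
def percProb {V : Type*} [Fintype V] [DecidableEq V] (p : ℝ) (S : Set (Sym2 V → Bool)) : ℝ :=
  ∑ ω : Sym2 V → Bool, if ω ∈ S then edgeWeight p ω else 0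

/-- Expectation under bond percolation with parameter `p`. -/
def percExp {V : Type*} [Fintype V] [DecidableEq V] (p : ℝ) (f : (Sym2 V → Bool) → ℝ) : ℝ :=
  ∑ ω : Sym2 V → Bool, edgeWeight p ω * f ω

/-- The configuration obtained from `ω` by closing every edge touching a vertex of `A`. -/
def closeOff {V : Type*} (A : Set V) (ω : Sym2 V → Bool) : Sym2 V → Bool :=
  fun e => if ∃ v ∈ A, v ∈ e then false else ω e

/-! ### Auxiliary path lemmas -/

section Paths

variable {V : Type*} {G : SimpleGraph V}

set_option linter.deprecated false in
lemma list_chain_cons {R : V → V → Prop} {a b : V} {l : List V} :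
    List.Chain R a (b :: l) ↔ R a b ∧ List.Chain R b l :=
  List.isChain_cons_cons

lemma connWithin_refl (ω : Sym2 V → Bool) (x : V) (r : ℕ) : ConnWithin G ω x x r :=
  ⟨[], List.Chain.nil, rfl, Nat.zero_le r⟩

lemma connWithin_le {ω : Sym2 V → Bool} {x z : V} {k r : ℕ} (h : k ≤ r)
    (hc : ConnWithin G ω x z k) : ConnWithin G ω x z r := by
  obtain ⟨l, h1, h2, h3⟩ := hc
  exact ⟨l, h1, h2, h3.trans h⟩

lemma connWithin_mono {ω ω' : Sym2 V → Bool} (h : ∀ e, ω e = true → ω' e = true)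
    {x z : V} {r : ℕ} (hc : ConnWithin G ω x z r) : ConnWithin G ω' x z r := by
  obtain ⟨l, h1, h2, h3⟩ := hc
  exact ⟨l, List.IsChain.imp (fun a b hab => ⟨hab.1, h _ hab.2⟩) h1, h2, h3⟩

lemma chain_snoc {R : V → V → Prop} :
    ∀ (l : List V) (x a : V), List.Chain R x l →
      R ((x :: l).getLast (List.cons_ne_nil x l)) a → List.Chain R x (l ++ [a])
  | [], x, a, _, h => List.Chain.cons h List.Chain.nil
  | b :: t, x, a, hc, h => by
    rw [list_chain_cons] at hc
    rw [List.cons_append, list_chain_cons]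
    refine ⟨hc.1, chain_snoc t b a hc.2 ?_⟩
    rwa [List.getLast_cons (List.cons_ne_nil b t)] at h

lemma connWithin_snoc {ω : Sym2 V → Bool} {x u a : V} {m : ℕ}
    (h : ConnWithin G ω x u m) (ha : OpenAdj G ω u a) : ConnWithin G ω x a (m + 1) := by
  obtain ⟨l, h1, h2, h3⟩ := h
  refine ⟨l ++ [a], chain_snoc l x a h1 (by rw [h2]; exact ha), ?_, ?_⟩
  · exact List.getLast_append_singleton (x :: l)
  · simp only [List.length_append, List.length_cons, List.length_nil]
    omega

lemma chain_transfer {ω ω' : Sym2 V → Bool} {A : Set V} {x : V} {r : ℕ}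
    (hagree : ∀ e : Sym2 V, (∃ v ∈ A, v ∈ e) → ω e = ω' e)
    (hball : ∀ v k, k ≤ r → ConnWithin G ω x v k → v ∈ A) :
    ∀ (l : List V) (u : V) (m : ℕ), m + l.length ≤ r → ConnWithin G ω x u m →
      (List.Chain (OpenAdj G ω) u l ↔ List.Chain (OpenAdj G ω') u l)
  | [], u, m, _, _ => by simp [List.Chain]
  | a :: t, u, m, hlen, hu => by
    have hlen' : m + t.length + 1 ≤ r := by
      simpa [Nat.add_comm, Nat.add_assoc, Nat.add_left_comm] using hlen
    have huA : u ∈ A := hball u m (by omega) hu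
    have he : ω s(u, a) = ω' s(u, a) := hagree _ ⟨u, huA, by simp⟩
    rw [list_chain_cons, list_chain_cons]
    constructor
    · rintro ⟨⟨hadj, hop⟩, hc⟩
      have ha : ConnWithin G ω x a (m + 1) := connWithin_snoc hu ⟨hadj, hop⟩
      exact ⟨⟨hadj, he.symm.trans hop⟩,
        (chain_transfer hagree hball t a (m + 1) (by omega) ha).mp hc⟩
    · rintro ⟨⟨hadj, hop⟩, hc⟩
      have hop2 : ω s(u, a) = true := he.trans hop
      have ha : ConnWithin G ω x a (m + 1) := connWithin_snoc hu ⟨hadj, hop2⟩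
      exact ⟨⟨hadj, hop2⟩,
        (chain_transfer hagree hball t a (m + 1) (by omega) ha).mpr hc⟩

lemma connWithin_iff_of_agree {ω ω' : Sym2 V → Bool} {A : Set V} {x : V} {r : ℕ}
    (hagree : ∀ e : Sym2 V, (∃ v ∈ A, v ∈ e) → ω e = ω' e)
    (hball : ∀ v k, k ≤ r → ConnWithin G ω x v k → v ∈ A)
    {z : V} {k : ℕ} (hk : k ≤ r) :
    ConnWithin G ω x z k ↔ ConnWithin G ω' x z k := by
  constructor
  · rintro ⟨l, h1, h2, h3⟩
    exact ⟨l, (chain_transfer hagree hball l x 0 (by omega) (connWithin_refl ω x 0)).mp h1,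
      h2, h3⟩
  · rintro ⟨l, h1, h2, h3⟩
    exact ⟨l, (chain_transfer hagree hball l x 0 (by omega) (connWithin_refl ω x 0)).mpr h1,
      h2, h3⟩

lemma closeOff_le {A : Set V} {ω : Sym2 V → Bool} : ∀ e, closeOff A ω e = true → ω e = true := by
  intro e h
  by_cases hc : ∃ v ∈ A, v ∈ e
  · simp [closeOff, hc] at h
  · simpa [closeOff, hc] using h

lemma chain_closeOff {ω : Sym2 V → Bool} {A : Set V} {y : V} {s : ℕ}
    (hav : ∀ v k, k ≤ s → ConnWithin G ω y v k → v ∉ A) :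
    ∀ (l : List V) (u : V) (m : ℕ), m + l.length ≤ s → ConnWithin G ω y u m →
      List.Chain (OpenAdj G ω) u l → List.Chain (OpenAdj G (closeOff A ω)) u l
  | [], _, _, _, _, _ => List.Chain.nil
  | a :: t, u, m, hlen, hu, hc => by
    rw [list_chain_cons] at hc ⊢
    obtain ⟨⟨hadj, hop⟩, hct⟩ := hc
    have hlen' : m + t.length + 1 ≤ s := by
      simpa [Nat.add_comm, Nat.add_assoc, Nat.add_left_comm] using hlen
    have ha : ConnWithin G ω y a (m + 1) := connWithin_snoc hu ⟨hadj, hop⟩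
    have huA : u ∉ A := hav u m (by omega) hu
    have haA : a ∉ A := hav a (m + 1) (by omega) ha
    have hcl : closeOff A ω s(u, a) = ω s(u, a) := by
      apply if_neg
      rintro ⟨v, hvA, hv⟩
      rw [Sym2.mem_iff] at hv
      rcases hv with rfl | rfl
      exacts [huA hvA, haA hvA]
    exact ⟨⟨hadj, by rw [hcl]; exact hop⟩,
      chain_closeOff hav t a (m + 1) (by omega) ha hct⟩

lemma sphere_closeOff {ω : Sym2 V → Bool} {A : Set V} {y : V} {s : ℕ}
    (hav : ∀ v k, k ≤ s → ConnWithin G ω y v k → v ∉ A)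
    (h : SphereNonempty G ω y s) : SphereNonempty G (closeOff A ω) y s := by
  obtain ⟨z, ⟨l, h1, h2, h3⟩, hmin⟩ := h
  refine ⟨z, ⟨l, chain_closeOff hav l y 0 (by omega) (connWithin_refl ω y 0) h1, h2, h3⟩,
    fun t ht hcon => hmin t ht (connWithin_mono closeOff_le hcon)⟩

end Paths

/-! ### Probability lemmas -/

section Prob

lemma sum_prod_bernoulli {ι : Type*} [Fintype ι] [DecidableEq ι] (p : ℝ) :
    ∑ g : ι → Bool, ∏ i, (if g i then p else 1 - p) = 1 := by
  have h := Fintype.prod_sum (ι := ι) (κ := fun _ => Bool)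
    (fun _ j => if j then p else 1 - p)
  rw [← h]
  have h1 : ∀ _i : ι, (∑ j : Bool, if j then p else 1 - p) = 1 := by
    intro i
    rw [Fintype.sum_bool, if_pos rfl, if_neg (by decide)]
    ring
  simp [h1]

variable {V : Type*} [Fintype V] [DecidableEq V]

lemma edgeWeight_nonneg {p : ℝ} (hp0 : 0 ≤ p) (hp1 : p ≤ 1) (ω : Sym2 V → Bool) :
    0 ≤ edgeWeight p ω := by
  refine Finset.prod_nonneg fun e _ => ?_
  by_cases h : ω e <;> simp [h] <;> linarith

lemma percProb_nonneg {p : ℝ} (hp0 : 0 ≤ p) (hp1 : p ≤ 1) (S : Set (Sym2 V → Bool)) :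
    0 ≤ percProb p S := by
  refine Finset.sum_nonneg fun ω _ => ?_
  split
  · exact edgeWeight_nonneg hp0 hp1 ω
  · exact le_rfl

set_option maxHeartbeats 1000000 in
lemma percProb_indep (p : ℝ) (D : Sym2 V → Prop) (S T : Set (Sym2 V → Bool))
    (hS : ∀ ω ω' : Sym2 V → Bool, (∀ e, D e → ω e = ω' e) → (ω ∈ S ↔ ω' ∈ S))
    (hT : ∀ ω ω' : Sym2 V → Bool, (∀ e, ¬ D e → ω e = ω' e) → (ω ∈ T ↔ ω' ∈ T)) :
    percProb p (S ∩ T) = percProb p S * percProb p T := by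
  let E := Equiv.piEquivPiSubtypeProd D fun _ : Sym2 V => Bool
  have hsymm : ∀ (a : {e : Sym2 V // D e} → Bool) (b : {e : Sym2 V // ¬ D e} → Bool)
      (e : Sym2 V), E.symm (a, b) e = if h : D e then a ⟨e, h⟩ else b ⟨e, h⟩ := fun a b e =>
    Equiv.piEquivPiSubtypeProd_symm_apply D (fun _ => Bool) (a, b) e
  have hedge : ∀ (a : {e : Sym2 V // D e} → Bool) (b : {e : Sym2 V // ¬ D e} → Bool),
      edgeWeight p (E.symm (a, b))
        = (∏ i : {e : Sym2 V // D e}, if a i then p else 1 - p) *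
          ∏ i : {e : Sym2 V // ¬ D e}, if b i then p else 1 - p := by
    intro a b
    rw [edgeWeight,
      ← Fintype.prod_subtype_mul_prod_subtype D fun e => if E.symm (a, b) e then p else 1 - p]
    congr 1
    · exact Finset.prod_congr rfl fun i _ => by rw [hsymm a b i, dif_pos i.2]
    · exact Finset.prod_congr rfl fun i _ => by rw [hsymm a b i, dif_neg i.2]
  have hS' : ∀ a b, (E.symm (a, b) ∈ S) ↔ (E.symm (a, fun _ => false) ∈ S) := by
    intro a b
    exact hS _ _ fun e he => by rw [hsymm, hsymm, dif_pos he, dif_pos he]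
  have hT' : ∀ a b, (E.symm (a, b) ∈ T) ↔ (E.symm (fun _ => false, b) ∈ T) := by
    intro a b
    exact hT _ _ fun e he => by rw [hsymm, hsymm, dif_neg he, dif_neg he]
  have hsum : ∀ U : Set (Sym2 V → Bool), percProb p U
      = ∑ a, ∑ b, if E.symm (a, b) ∈ U then edgeWeight p (E.symm (a, b)) else 0 := by
    intro U
    rw [percProb, ← Equiv.sum_comp E.symm fun ω => if ω ∈ U then edgeWeight p ω else 0,
      Fintype.sum_prod_type]
  have h1 : percProb p (S ∩ T)
      = (∑ a, if E.symm (a, fun _ => false) ∈ S then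
            ∏ i : {e : Sym2 V // D e}, (if a i then p else 1 - p) else 0) *
        (∑ b, if E.symm (fun _ => false, b) ∈ T then
            ∏ i : {e : Sym2 V // ¬ D e}, (if b i then p else 1 - p) else 0) := by
    rw [hsum, Fintype.sum_mul_sum]
    refine Finset.sum_congr rfl fun a _ => Finset.sum_congr rfl fun b _ => ?_
    rw [hedge a b]
    by_cases hA : E.symm (a, fun _ => false) ∈ S <;>
      by_cases hB : E.symm (fun _ => false, b) ∈ T <;>
        simp [Set.mem_inter_iff, hS' a b, hT' a b, hA, hB]
  have h2 : percProb p S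
      = ∑ a, if E.symm (a, fun _ => false) ∈ S then
          ∏ i : {e : Sym2 V // D e}, (if a i then p else 1 - p) else 0 := by
    rw [hsum]
    have key : ∀ a, (∑ b, if E.symm (a, b) ∈ S then edgeWeight p (E.symm (a, b)) else 0)
        = (if E.symm (a, fun _ => false) ∈ S then
            ∏ i : {e : Sym2 V // D e}, (if a i then p else 1 - p) else 0) *
          ∑ b : {e : Sym2 V // ¬ D e} → Bool,
            ∏ i : {e : Sym2 V // ¬ D e}, (if b i then p else 1 - p) := by
      intro a
      rw [Finset.mul_sum]
      refine Finset.sum_congr rfl fun b _ => ?_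
      rw [hedge a b]
      by_cases hA : E.symm (a, fun _ => false) ∈ S <;> simp [hS' a b, hA]
    simp only [key]
    rw [← Finset.sum_mul, sum_prod_bernoulli, mul_one]
  have h3 : percProb p T
      = ∑ b, if E.symm (fun _ => false, b) ∈ T then
          ∏ i : {e : Sym2 V // ¬ D e}, (if b i then p else 1 - p) else 0 := by
    rw [hsum]
    have key : ∀ (a : {e : Sym2 V // D e} → Bool) (b : {e : Sym2 V // ¬ D e} → Bool),
        (if E.symm (a, b) ∈ T then edgeWeight p (E.symm (a, b)) else 0)
          = (∏ i : {e : Sym2 V // D e}, (if a i then p else 1 - p)) *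
            (if E.symm (fun _ => false, b) ∈ T then
              ∏ i : {e : Sym2 V // ¬ D e}, (if b i then p else 1 - p) else 0) := by
      intro a b
      rw [hedge a b]
      by_cases hB : E.symm (fun _ => false, b) ∈ T <;> simp [hT' a b, hB]
    simp only [key]
    rw [← Fintype.sum_mul_sum, sum_prod_bernoulli, one_mul]
  rw [h1, h2, h3]

end Prob

/-! ### Events used in the decomposition -/

section Events

variable {V : Type*} [Fintype V] [DecidableEq V]

/-- The intrinsic ball of radius `r` around `x` as a finset. -/
def ballFin (G : SimpleGraph V) (ω : Sym2 V → Bool) (x : V) (r : ℕ) : Finset V :=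
  Finset.univ.filter fun z => ConnWithin G ω x z r

/-- The event that the ball of radius `r` around `x` equals `A` and the sphere is nonempty. -/
def SAset (G : SimpleGraph V) (x : V) (r : ℕ) (A : Finset V) : Set (Sym2 V → Bool) :=
  {ω | ballFin G ω x r = A ∧ SphereNonempty G ω x r}

/-- The event that the sphere of radius `s` around `y` is nonempty off `A`. -/
def TAset (G : SimpleGraph V) (y : V) (s : ℕ) (A : Finset V) : Set (Sym2 V → Bool) :=
  {ω | SphereNonempty G (closeOff (↑A) ω) y s}

lemma SAset_invariant (G : SimpleGraph V) (x : V) (r : ℕ) (A : Finset V)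
    (ω ω' : Sym2 V → Bool) (hag : ∀ e, (∃ v ∈ (↑A : Set V), v ∈ e) → ω e = ω' e)
    (hω : ω ∈ SAset G x r A) : ω' ∈ SAset G x r A := by
  obtain ⟨hball, hsph⟩ := hω
  have hball' : ∀ v k, k ≤ r → ConnWithin G ω x v k → v ∈ (↑A : Set V) := by
    intro v k hk hc
    have hv : v ∈ ballFin G ω x r :=
      Finset.mem_filter.mpr ⟨Finset.mem_univ v, connWithin_le hk hc⟩
    rw [hball] at hv
    exact Finset.mem_coe.mpr hv
  have hiff : ∀ z k, k ≤ r → (ConnWithin G ω x z k ↔ ConnWithin G ω' x z k) :=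
    fun z k hk => connWithin_iff_of_agree hag hball' hk
  constructor
  · ext z
    rw [← hball]
    simp only [ballFin, Finset.mem_filter, Finset.mem_univ, true_and]
    exact (hiff z r le_rfl).symm
  · obtain ⟨z, hz1, hz2⟩ := hsph
    exact ⟨z, (hiff z r le_rfl).mp hz1, fun t ht hc => hz2 t ht ((hiff z t ht.le).mpr hc)⟩

lemma TAset_invariant (G : SimpleGraph V) (y : V) (s : ℕ) (A : Finset V)
    (ω ω' : Sym2 V → Bool) (hag : ∀ e, ¬ (∃ v ∈ (↑A : Set V), v ∈ e) → ω e = ω' e) :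
    ω ∈ TAset G y s A ↔ ω' ∈ TAset G y s A := by
  have hco : closeOff (↑A) ω = closeOff (↑A) ω' := by
    funext e
    by_cases h : ∃ v ∈ (↑A : Set V), v ∈ e
    · simp only [closeOff, if_pos h]
    · simp only [closeOff, if_neg h]
      exact hag e h
  unfold TAset
  rw [Set.mem_setOf_eq, Set.mem_setOf_eq, hco]

end Events

set_option maxHeartbeats 1000000 in
/-- **Disjoint survival.**  For bond percolation with parameter `p`, vertices `x, y` and
integers `r, s`:
`P(∂B_x(r) ≠ ∅, ∂B_y(s) ≠ ∅, B_x(r) ∩ B_y(s) = ∅)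
  ≤ P(∂B_x(r) ≠ ∅) · max_{A ⊆ V} P(∂B_y(s) ≠ ∅ off A)`. -/
theorem disjoint_survival {V : Type*} [Fintype V] [DecidableEq V]
    (G : SimpleGraph V) (p : ℝ) (hp0 : 0 ≤ p) (hp1 : p ≤ 1)
    (x y : V) (r s : ℕ) :
    percProb p {ω | SphereNonempty G ω x r ∧ SphereNonempty G ω y s ∧
        {z | ConnWithin G ω x z r} ∩ {z | ConnWithin G ω y z s} = ∅}
      ≤ percProb p {ω | SphereNonempty G ω x r} *
          ⨆ A : Finset V, percProb p {ω | SphereNonempty G (closeOff (↑A) ω) y s} := by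
  set L : Set (Sym2 V → Bool) := {ω | SphereNonempty G ω x r ∧ SphereNonempty G ω y s ∧
      {z | ConnWithin G ω x z r} ∩ {z | ConnWithin G ω y z s} = ∅} with hLdef
  -- membership of the big event in the decomposed events
  have hmem : ∀ ω ∈ L, ω ∈ SAset G x r (ballFin G ω x r) ∩ TAset G y s (ballFin G ω x r) := by
    rintro ω ⟨hx, hy, hdisj⟩
    refine ⟨⟨rfl, hx⟩, ?_⟩
    have hav : ∀ v k, k ≤ s → ConnWithin G ω y v k → v ∉ (↑(ballFin G ω x r) : Set V) := by
      intro v k hk hc hvball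
      have hvx : ConnWithin G ω x v r :=
        (Finset.mem_filter.mp (Finset.mem_coe.mp hvball)).2
      have hvy : ConnWithin G ω y v s := connWithin_le hk hc
      have hvmem : v ∈ ({z | ConnWithin G ω x z r} ∩ {z | ConnWithin G ω y z s}) :=
        ⟨hvx, hvy⟩
      rw [hdisj] at hvmem
      exact hvmem
    exact sphere_closeOff hav hy
  have step1 : percProb p L ≤ ∑ A : Finset V, percProb p (SAset G x r A ∩ TAset G y s A) := by
    have hle : percProb p L ≤ ∑ ω : Sym2 V → Bool, ∑ A : Finset V,
        (if ω ∈ SAset G x r A ∩ TAset G y s A then edgeWeight p ω else 0) := by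
      refine Finset.sum_le_sum fun ω _ => ?_
      by_cases hω : ω ∈ L
      · rw [if_pos hω]
        have h0 : (if ω ∈ SAset G x r (ballFin G ω x r) ∩ TAset G y s (ballFin G ω x r) then
            edgeWeight p ω else 0) = edgeWeight p ω := if_pos (hmem ω hω)
        have hnn : ∀ B : Finset V, B ∈ (Finset.univ : Finset (Finset V)) →
            0 ≤ (fun A => if ω ∈ SAset G x r A ∩ TAset G y s A then
              edgeWeight p ω else 0) B := by
          intro B _
          show 0 ≤ if ω ∈ SAset G x r B ∩ TAset G y s B then edgeWeight p ω else 0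
          split
          · exact edgeWeight_nonneg hp0 hp1 ω
          · exact le_rfl
        have hsingle := Finset.single_le_sum
          (f := fun A => if ω ∈ SAset G x r A ∩ TAset G y s A then edgeWeight p ω else 0)
          hnn (Finset.mem_univ (ballFin G ω x r))
        exact le_of_eq_of_le h0.symm hsingle
      · rw [if_neg hω]
        refine Finset.sum_nonneg fun A _ => ?_
        split
        · exact edgeWeight_nonneg hp0 hp1 ω
        · exact le_rfl
    calc percProb p L ≤ _ := hle
    _ = ∑ A : Finset V, percProb p (SAset G x r A ∩ TAset G y s A) := by
        rw [Finset.sum_comm]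
        refine Finset.sum_congr rfl fun A _ => ?_
        rw [percProb]
        exact Finset.sum_congr rfl fun ω _ => by congr!
  have step2 : ∀ A : Finset V, percProb p (SAset G x r A ∩ TAset G y s A)
      = percProb p (SAset G x r A) * percProb p (TAset G y s A) := by
    intro A
    refine percProb_indep p (fun e => ∃ v ∈ (↑A : Set V), v ∈ e) _ _ ?_ ?_
    · intro ω ω' hag
      exact ⟨SAset_invariant G x r A ω ω' hag,
        SAset_invariant G x r A ω' ω fun e he => (hag e he).symm⟩
    · intro ω ω' hag
      exact TAset_invariant G y s A ω ω' hag
  have step3 : ∑ A : Finset V, percProb p (SAset G x r A)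
      = percProb p {ω | SphereNonempty G ω x r} := by
    simp only [percProb]
    rw [Finset.sum_comm]
    refine Finset.sum_congr rfl fun ω _ => ?_
    simp only [Set.mem_setOf_eq]
    by_cases hs : SphereNonempty G ω x r
    · rw [if_pos hs]
      have hcond : ∀ A : Finset V, (if ω ∈ SAset G x r A then edgeWeight p ω else 0)
          = if ballFin G ω x r = A then edgeWeight p ω else 0 := by
        intro A
        by_cases h : ballFin G ω x r = A <;>
          simp [SAset, Set.mem_setOf_eq, h, hs]
      simp only [hcond]
      rw [Finset.sum_ite_eq]
      simp
    · rw [if_neg hs]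
      refine Finset.sum_eq_zero fun A _ => if_neg ?_
      rintro ⟨_, h2⟩
      exact hs h2
  have hM : ∀ A : Finset V, percProb p (TAset G y s A)
      ≤ ⨆ B : Finset V, percProb p (TAset G y s B) := fun A =>
    le_ciSup (f := fun B : Finset V => percProb p (TAset G y s B))
      (Set.Finite.bddAbove (Set.finite_range _)) A
  calc percProb p L
      ≤ ∑ A : Finset V, percProb p (SAset G x r A ∩ TAset G y s A) := step1
    _ = ∑ A : Finset V, percProb p (SAset G x r A) * percProb p (TAset G y s A) :=
        Finset.sum_congr rfl fun A _ => step2 A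
    _ ≤ ∑ A : Finset V, percProb p (SAset G x r A) *
          ⨆ B : Finset V, percProb p (TAset G y s B) :=
        Finset.sum_le_sum fun A _ =>
          mul_le_mul_of_nonneg_left (hM A) (percProb_nonneg hp0 hp1 _)
    _ = (∑ A : Finset V, percProb p (SAset G x r A)) *
          ⨆ B : Finset V, percProb p (TAset G y s B) := (Finset.sum_mul _ _ _).symm
    _ = percProb p {ω | SphereNonempty G ω x r} *
          ⨆ B : Finset V, percProb p (TAset G y s B) := by rw [step3]

end
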